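/- Let α > 0 and k be real numbers, and let (τ_j) and (ξ_j) be sequences of positive reals with τ_j → 0, ξ_j → 0 and ξ_j/τ_j → k as j → ∞. Then for all fixed real t and x, the sequence j ↦ (ξ_j²/(α·τ_j) + 1)^{t/τ_j + x/ξ_j} (real power of a positive base) tends to exp(k²·t/α + k·x/α). -/

import Mathlib

open Filter

/-- The non-limit heat-equation solution `(ξ²/(ατ) + 1)^{t/τ + x/ξ}` tends to the
classical solution `exp(k²t/α + kx/α)` as the steps `τ, ξ → 0` with `ξ/τ → k`. -/
theorem nonlimit_heat_tendsto_exp (α k : ℝ) (hα : 0 < α)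
    (τ ξ : ℕ → ℝ) (hτpos : ∀ j, 0 < τ j) (hξpos : ∀ j, 0 < ξ j)
    (hτ0 : Tendsto τ atTop (nhds 0)) (hξ0 : Tendsto ξ atTop (nhds 0))
    (hratio : Tendsto (fun j => ξ j / τ j) atTop (nhds k)) :
    ∀ t x : ℝ,
      Tendsto (fun j => ((ξ j) ^ 2 / (α * τ j) + 1) ^ (t / τ j + x / ξ j)) atTop
        (nhds (Real.exp (k ^ 2 * t / α + k * x / α))) := by
  intro t x
  set y : ℕ → ℝ := fun j => (ξ j) ^ 2 / (α * τ j) with hy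
  have hypos : ∀ j, 0 < y j := fun j =>
    div_pos (pow_pos (hξpos j) 2) (mul_pos hα (hτpos j))
  have hy0 : Tendsto y atTop (nhds 0) := by
    have h : Tendsto (fun j => (ξ j / τ j) * ξ j / α) atTop (nhds (k * 0 / α)) :=
      (hratio.mul hξ0).div_const α
    rw [mul_zero, zero_div] at h
    refine h.congr fun j => ?_
    simp only [hy]
    field_simp [hy]
  -- log(1+y)/y → 1
  have hlog : Tendsto (fun j => Real.log (1 + y j) / y j) atTop (nhds 1) := by
    have hd : HasDerivAt Real.log 1 1 := by
      simpa using Real.hasDerivAt_log one_ne_zero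
    have hslope := hasDerivAt_iff_tendsto_slope.mp hd
    have h1 : Tendsto (fun j => 1 + y j) atTop (nhdsWithin 1 {(1:ℝ)}ᶜ) := by
      apply tendsto_nhdsWithin_of_tendsto_nhds_of_eventually_within
      · simpa using tendsto_const_nhds.add hy0
      · filter_upwards with j
        have := hypos j
        simp only [Set.mem_compl_iff, Set.mem_singleton_iff]
        intro hcontra
        nlinarith
    have := hslope.comp h1
    refine this.congr fun j => ?_
    simp [Function.comp, slope_def_field, Real.log_one]
  -- (t/τ + x/ξ) * y → k²t/α + kx/α
  have harg : Tendsto (fun j => (t / τ j + x / ξ j) * y j) atTop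
      (nhds (k ^ 2 * t / α + k * x / α)) := by
    have h : Tendsto (fun j => (ξ j / τ j) ^ 2 * (t / α) + (ξ j / τ j) * (x / α)) atTop
        (nhds (k ^ 2 * (t / α) + k * (x / α))) :=
      (((hratio.pow 2).mul_const _).add (hratio.mul_const _))
    have heq : k ^ 2 * (t / α) + k * (x / α) = k ^ 2 * t / α + k * x / α := by ring
    rw [heq] at h
    refine h.congr fun j => ?_
    have hτ := (hτpos j).ne'
    have hξ := (hξpos j).ne'
    have hα' := hα.ne'
    simp only [hy]
    field_simp [hy]
  have hmain : Tendsto (fun j => Real.log (1 + y j) * (t / τ j + x / ξ j)) atTop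
      (nhds (k ^ 2 * t / α + k * x / α)) := by
    have h := hlog.mul harg
    rw [one_mul] at h
    refine h.congr fun j => ?_
    have hyne := (hypos j).ne'
    field_simp
  have hexp := (Real.continuous_exp.tendsto _).comp hmain
  refine hexp.congr fun j => ?_
  have hbpos : 0 < y j + 1 := by linarith [hypos j]
  simp only [Function.comp]
  rw [show (ξ j) ^ 2 / (α * τ j) + 1 = y j + 1 from rfl,
    Real.rpow_def_of_pos hbpos, add_comm (y j) 1]
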